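/- Suppose the X_j take values in ℕ, let a, b : D → ℝ be Borel measurable with a∘Θ and b∘Θ P-integrable, write f_θ(k) := P_θ(X_1 = k), and assume that for P_Θ-almost all θ ∈ D: (1) under P_θ the sequence X is independent and identically distributed; (2) σ(N) and σ(X_1, X_2, …) are independent under P_θ; (3) P_θ(N = n) = (a(θ) + b(θ)/n) · P_θ(N = n − 1) for every integer n ≥ 1; and (4) a(θ) · f_θ(0) < 1. Then for every integer x ≥ 1, P(S = x) = Σ_{y=1}^{x} ∫_Ω 1_{{S = x − y}}(ω) · (a(Θ(ω)) + b(Θ(ω))·y/x) · f_{Θ(ω)}(y) / (1 − a(Θ(ω)) · f_{Θ(ω)}(0)) dP(ω). -/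

import Mathlib

open MeasureTheory ProbabilityTheory Finset
open scoped NNReal ENNReal

namespace PanjerAux

variable {Ω : Type*} [MeasurableSpace Ω] {μ : Measure Ω} [IsProbabilityMeasure μ]
  {X : ℕ → Ω → ℕ}

lemma measurable_T (hX : ∀ j, Measurable (X j)) (s : Finset ℕ) :
    Measurable (fun ω => ∑ j ∈ s, X j ω) :=
  Finset.measurable_sum s (fun j _ => hX j)

lemma conv (hX : ∀ j, Measurable (X j))
    (hi : iIndepFun X μ)
    {s : Finset ℕ} {i : ℕ} (his : i ∉ s) (w : ℕ) :
    μ {ω | X i ω + ∑ j ∈ s, X j ω = w}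
      = ∑ y ∈ range (w+1), μ (X i ⁻¹' {y}) * μ {ω | (∑ j ∈ s, X j ω) = w - y} := by
  have hT : Measurable (fun ω => ∑ j ∈ s, X j ω) := measurable_T hX s
  have hindep : IndepFun (X i) (fun ω => ∑ j ∈ s, X j ω) μ := by
    have := (hi.indepFun_finsetSum_of_notMem hX his).symm
    convert this using 1
    ext ω
    simp
  have hset : {ω | X i ω + ∑ j ∈ s, X j ω = w}
      = ⋃ y ∈ range (w+1), (X i ⁻¹' {y} ∩ (fun ω => ∑ j ∈ s, X j ω) ⁻¹' {w - y}) := by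
    ext ω
    simp only [Set.mem_setOf_eq, Set.mem_iUnion, Set.mem_inter_iff, Set.mem_preimage,
      Set.mem_singleton_iff, Finset.mem_range]
    constructor
    · intro h
      exact ⟨X i ω, by omega, rfl, by omega⟩
    · rintro ⟨y, hy, h1, h2⟩
      omega
  rw [hset, measure_biUnion_finset]
  · refine Finset.sum_congr rfl (fun y hy => ?_)
    exact hindep.measure_inter_preimage_eq_mul _ _ (measurableSet_singleton y)
      (measurableSet_singleton (w - y))
  · intro y hy y' hy' hne
    simp only [Function.onFun]
    refine Set.disjoint_left.2 (fun ω hω hω' => ?_)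
    exact hne (hω.1.symm.trans hω'.1)
  · intro y hy
    exact ((hX i) (measurableSet_singleton y)).inter (hT (measurableSet_singleton (w - y)))

end PanjerAux

namespace PanjerAux
set_option linter.unusedSectionVars false

variable {Ω : Type*} [MeasurableSpace Ω] {μ : Measure Ω} [IsProbabilityMeasure μ]
  {X : ℕ → Ω → ℕ}

lemma map_eq (hX : ∀ j, Measurable (X j))
    (hid : ∀ j, μ.map (X j) = μ.map (X 0)) (j y : ℕ) :
    μ (X j ⁻¹' {y}) = μ (X 0 ⁻¹' {y}) := by
  rw [← Measure.map_apply (hX j) (measurableSet_singleton y),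
    ← Measure.map_apply (hX 0) (measurableSet_singleton y), hid j]

lemma card_law (hX : ∀ j, Measurable (X j))
    (hi : iIndepFun X μ)
    (hid : ∀ j, μ.map (X j) = μ.map (X 0)) (s : Finset ℕ) (w : ℕ) :
    μ {ω | (∑ j ∈ s, X j ω) = w} = μ {ω | (∑ j ∈ range s.card, X j ω) = w} := by
  classical
  induction s using Finset.induction_on generalizing w with
  | empty => simp
  | @insert a s ha ih =>
    have h1 : {ω | (∑ j ∈ insert a s, X j ω) = w}
        = {ω | X a ω + ∑ j ∈ s, X j ω = w} := by
      ext ω; simp [Finset.sum_insert ha]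
    have hcs : (card s) ∉ range (card s) := by simp
    have h2 : {ω | (∑ j ∈ range (insert a s).card, X j ω) = w}
        = {ω | X (card s) ω + ∑ j ∈ range (card s), X j ω = w} := by
      ext ω
      simp [Finset.card_insert_of_notMem ha, Finset.range_add_one, Finset.sum_insert hcs]
    rw [h1, h2, conv hX hi ha w, conv hX hi hcs w]
    refine Finset.sum_congr rfl (fun y _ => ?_)
    rw [map_eq hX hid a y, map_eq hX hid (card s) y, ih]

lemma Gm_succ (hX : ∀ j, Measurable (X j))
    (hi : iIndepFun X μ)
    (hid : ∀ j, μ.map (X j) = μ.map (X 0)) (n z : ℕ) :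
    μ {ω | (∑ j ∈ range (n+1), X j ω) = z}
      = ∑ y ∈ range (z+1), μ (X 0 ⁻¹' {y}) * μ {ω | (∑ j ∈ range n, X j ω) = z - y} := by
  have hn : n ∉ range n := by simp
  have h2 : {ω | (∑ j ∈ range (n+1), X j ω) = z}
      = {ω | X n ω + ∑ j ∈ range n, X j ω = z} := by
    ext ω; simp [Finset.range_add_one, Finset.sum_insert hn]
  rw [h2, conv hX hi hn z]
  refine Finset.sum_congr rfl (fun y _ => ?_)
  rw [map_eq hX hid n y]

end PanjerAux

namespace PanjerAux
set_option linter.unusedSectionVars false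

variable {Ω : Type*} [MeasurableSpace Ω] {μ : Measure Ω} [IsProbabilityMeasure μ]
  {X : ℕ → Ω → ℕ}

lemma symm_id (hX : ∀ j, Measurable (X j))
    (hi : iIndepFun X μ)
    (hid : ∀ j, μ.map (X j) = μ.map (X 0)) (n z : ℕ) :
    (z:ℝ) * (μ {ω | (∑ j ∈ range n, X j ω) = z}).toReal
      = (n:ℝ) * ∑ y ∈ range (z+1), (y:ℝ) * (μ (X 0 ⁻¹' {y})).toReal
          * (μ {ω | (∑ j ∈ range (n-1), X j ω) = z - y}).toReal := by
  classical
  set A : Set Ω := {ω | (∑ j ∈ range n, X j ω) = z} with hAdef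
  have hA : MeasurableSet A := measurable_T hX (range n) (measurableSet_singleton z)
  -- integrability of each X j on A
  have hXle : ∀ j ∈ range n, ∀ ω ∈ A, X j ω ≤ z := by
    intro j hj ω hω
    have h1 : X j ω ≤ ∑ i ∈ range n, X i ω :=
      Finset.single_le_sum (f := fun i => X i ω) (fun i _ => Nat.zero_le _) hj
    have h2 : (∑ i ∈ range n, X i ω) = z := hω
    omega
  have hXint : ∀ j ∈ range n, IntegrableOn (fun ω => (X j ω : ℝ)) A μ := by
    intro j hj
    refine Integrable.mono' (integrable_const (z:ℝ)) ((measurable_from_top.comp (hX j)).aestronglyMeasurable) ?_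
    rw [ae_restrict_iff' hA]
    refine ae_of_all _ (fun ω hω => ?_)
    rw [Real.norm_eq_abs, abs_of_nonneg (by positivity)]
    exact_mod_cast hXle j hj ω hω
  -- step 1 and 2
  have step1 : (z:ℝ) * (μ A).toReal = ∑ j ∈ range n, ∫ ω in A, (X j ω : ℝ) ∂μ := by
    have hptw : ∀ ω ∈ A, (z:ℝ) = ∑ j ∈ range n, (X j ω : ℝ) := by
      intro ω hω
      have hω' : (∑ j ∈ range n, X j ω) = z := hω
      push_cast [← hω']
      rfl
    calc (z:ℝ) * (μ A).toReal = ∫ _ω in A, (z:ℝ) ∂μ := by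
          rw [setIntegral_const, smul_eq_mul, mul_comm]
          rfl
      _ = ∫ ω in A, ∑ j ∈ range n, (X j ω : ℝ) ∂μ := setIntegral_congr_fun hA hptw
      _ = ∑ j ∈ range n, ∫ ω in A, (X j ω : ℝ) ∂μ := integral_finset_sum _ hXint
  -- step 3
  have step3 : ∀ j ∈ range n, ∫ ω in A, (X j ω : ℝ) ∂μ
      = ∑ y ∈ range (z+1), (y:ℝ) * (μ (A ∩ X j ⁻¹' {y})).toReal := by
    intro j hj
    have hps : ∀ ω ∈ A, (X j ω : ℝ)
        = ∑ y ∈ range (z+1), Set.indicator (X j ⁻¹' {y}) (fun _ => (y:ℝ)) ω := by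
      intro ω hω
      rw [Finset.sum_eq_single_of_mem (X j ω)
        (by simp only [Finset.mem_range]; exact Nat.lt_succ_of_le (hXle j hj ω hω))]
      · rw [Set.indicator_of_mem (by simp [Set.mem_preimage])]
      · intro y _ hy
        rw [Set.indicator_of_notMem]
        simp only [Set.mem_preimage, Set.mem_singleton_iff]
        exact fun h => hy (h ▸ rfl)
    rw [setIntegral_congr_fun hA hps, integral_finset_sum]
    · refine Finset.sum_congr rfl (fun y _ => ?_)
      rw [setIntegral_indicator ((hX j) (measurableSet_singleton y)), setIntegral_const,
        smul_eq_mul, mul_comm]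
      rfl
    · intro y _
      exact (Integrable.indicator (integrable_const _)
        ((hX j) (measurableSet_singleton y))).integrableOn
  -- step 4/5
  have step45 : ∀ j ∈ range n, ∀ y ∈ range (z+1),
      μ (A ∩ X j ⁻¹' {y})
        = μ (X 0 ⁻¹' {y}) * μ {ω | (∑ i ∈ range (n-1), X i ω) = z - y} := by
    intro j hj y hy
    have hyz : y ≤ z := by simpa using Nat.lt_succ_iff.mp (Finset.mem_range.mp hy)
    have hjn : j ∈ range n := hj
    have hset : A ∩ X j ⁻¹' {y}
        = X j ⁻¹' {y} ∩ (fun ω => ∑ i ∈ (range n).erase j, X i ω) ⁻¹' {z - y} := by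
      ext ω
      simp only [hAdef, Set.mem_inter_iff, Set.mem_setOf_eq, Set.mem_preimage,
        Set.mem_singleton_iff]
      have hsum : X j ω + ∑ i ∈ (range n).erase j, X i ω = ∑ i ∈ range n, X i ω :=
        Finset.add_sum_erase (range n) (fun i => X i ω) hjn
      omega
    have hindep : IndepFun (X j) (fun ω => ∑ i ∈ (range n).erase j, X i ω) μ := by
      have := (hi.indepFun_finsetSum_of_notMem hX (Finset.notMem_erase j (range n))).symm
      convert this using 1
      ext ω
      simp
    have hpre : (fun ω => ∑ i ∈ (range n).erase j, X i ω) ⁻¹' {z - y}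
        = {ω | (∑ i ∈ (range n).erase j, X i ω) = z - y} := rfl
    rw [hset, hindep.measure_inter_preimage_eq_mul _ _ (measurableSet_singleton y)
      (measurableSet_singleton (z - y)), map_eq hX hid j y, hpre,
      card_law hX hi hid ((range n).erase j) (z - y),
      Finset.card_erase_of_mem hjn, Finset.card_range]
  -- combine
  rw [step1, Finset.sum_congr rfl step3]
  have : ∀ j ∈ range n, ∑ y ∈ range (z+1), (y:ℝ) * (μ (A ∩ X j ⁻¹' {y})).toReal
      = ∑ y ∈ range (z+1), (y:ℝ) * (μ (X 0 ⁻¹' {y})).toReal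
          * (μ {ω | (∑ i ∈ range (n-1), X i ω) = z - y}).toReal := by
    intro j hj
    refine Finset.sum_congr rfl (fun y hy => ?_)
    rw [step45 j hj y hy, ENNReal.toReal_mul]
    ring
  rw [Finset.sum_congr rfl this, Finset.sum_const, Finset.card_range, nsmul_eq_mul]

end PanjerAux

namespace PanjerAux
set_option linter.unusedSectionVars false

variable {Ω : Type*} [MeasurableSpace Ω] {μ : Measure Ω} [IsProbabilityMeasure μ]
  {X : ℕ → Ω → ℕ} {N : Ω → ℕ}

lemma S_decomp (N : Ω → ℕ) (X : ℕ → Ω → ℕ) (z : ℕ) :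
    {ω | (∑ j ∈ range (N ω), X j ω) = z}
      = ⋃ n, (N ⁻¹' {n} ∩ {ω | (∑ j ∈ range n, X j ω) = z}) := by
  ext ω
  simp only [Set.mem_setOf_eq, Set.mem_iUnion, Set.mem_inter_iff, Set.mem_preimage,
    Set.mem_singleton_iff]
  constructor
  · intro h; exact ⟨N ω, rfl, h⟩
  · rintro ⟨n, rfl, h⟩; exact h

lemma measurable_S (hN : Measurable N) (hX : ∀ j, Measurable (X j)) :
    Measurable (fun ω => ∑ j ∈ range (N ω), X j ω) := by
  apply measurable_to_countable'
  intro z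
  have : (fun ω => ∑ j ∈ range (N ω), X j ω) ⁻¹' {z}
      = ⋃ n, (N ⁻¹' {n} ∩ {ω | (∑ j ∈ range n, X j ω) = z}) := S_decomp N X z
  rw [this]
  exact MeasurableSet.iUnion (fun n =>
    (hN (measurableSet_singleton n)).inter
      (measurable_T hX (range n) (measurableSet_singleton z)))

lemma Sm_eq (hN : Measurable N) (hX : ∀ j, Measurable (X j))
    (h3 : Indep (MeasurableSpace.comap N inferInstance)
      (MeasurableSpace.comap (fun ω (k : ℕ) => X k ω) inferInstance) μ) (z : ℕ) :
    μ {ω | (∑ j ∈ range (N ω), X j ω) = z}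
      = ∑' n, μ (N ⁻¹' {n}) * μ {ω | (∑ j ∈ range n, X j ω) = z} := by
  rw [S_decomp N X z, measure_iUnion]
  · refine tsum_congr (fun n => ?_)
    have hmem1 : MeasurableSet[MeasurableSpace.comap N inferInstance] (N ⁻¹' {n}) :=
      ⟨{n}, measurableSet_singleton n, rfl⟩
    have hmem2 : MeasurableSet[MeasurableSpace.comap (fun ω (k : ℕ) => X k ω) inferInstance]
        {ω | (∑ j ∈ range n, X j ω) = z} := by
      refine ⟨{v : ℕ → ℕ | (∑ j ∈ range n, v j) = z}, ?_, rfl⟩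
      exact (Finset.measurable_sum (range n) fun j _ => measurable_pi_apply j)
        (measurableSet_singleton z)
    exact ((h3.indepSet_of_measurableSet hmem1 hmem2).measure_inter_eq_mul)
  · intro i j hij
    simp only [Function.onFun]
    exact Set.disjoint_left.2 (fun ω hω hω' => hij (hω.1.symm.trans hω'.1))
  · intro n
    exact (hN (measurableSet_singleton n)).inter
      (measurable_T hX (range n) (measurableSet_singleton z))

lemma summable_p (hN : Measurable N) :
    Summable (fun n => (μ (N ⁻¹' {n})).toReal) := by
  apply ENNReal.summable_toReal
  have hd : Pairwise (Function.onFun Disjoint fun n => N ⁻¹' {n}) := by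
    intro i j hij
    exact Set.disjoint_left.2 (fun ω hω hω' => hij (hω.symm.trans hω'))
  rw [← measure_iUnion hd (fun n => hN (measurableSet_singleton n))]
  exact measure_ne_top μ _

lemma summable_pG (hN : Measurable N) (hX : ∀ j, Measurable (X j))
    (h3 : Indep (MeasurableSpace.comap N inferInstance)
      (MeasurableSpace.comap (fun ω (k : ℕ) => X k ω) inferInstance) μ) (z : ℕ) :
    Summable (fun n => (μ (N ⁻¹' {n})).toReal
      * (μ {ω | (∑ j ∈ range n, X j ω) = z}).toReal) := by
  have := Sm_eq hN hX h3 z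
  have hfin : ∑' n, μ (N ⁻¹' {n}) * μ {ω | (∑ j ∈ range n, X j ω) = z} ≠ ⊤ := by
    rw [← this]; exact measure_ne_top μ _
  have := ENNReal.summable_toReal hfin
  refine (summable_congr (fun n => ?_)).mp this
  rw [ENNReal.toReal_mul]

lemma g_eq (hN : Measurable N) (hX : ∀ j, Measurable (X j))
    (h3 : Indep (MeasurableSpace.comap N inferInstance)
      (MeasurableSpace.comap (fun ω (k : ℕ) => X k ω) inferInstance) μ) (z : ℕ) :
    (μ {ω | (∑ j ∈ range (N ω), X j ω) = z}).toReal
      = ∑' n, (μ (N ⁻¹' {n})).toReal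
          * (μ {ω | (∑ j ∈ range n, X j ω) = z}).toReal := by
  rw [Sm_eq hN hX h3 z, ENNReal.tsum_toReal_eq (fun n => ?_)]
  · exact tsum_congr (fun n => ENNReal.toReal_mul)
  · exact ENNReal.mul_ne_top (measure_ne_top μ _) (measure_ne_top μ _)

end PanjerAux

namespace PanjerAux
set_option linter.unusedSectionVars false

variable {Ω : Type*} [MeasurableSpace Ω] {μ : Measure Ω} [IsProbabilityMeasure μ]
  {N : Ω → ℕ} {a b : ℝ}

lemma deg (hN : Measurable N)
    (hrec : ∀ n : ℕ, 1 ≤ n → (μ (N ⁻¹' {n})).toReal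
      = (a + b/(n:ℝ)) * (μ (N ⁻¹' {n-1})).toReal)
    (ha1 : 1 ≤ a) : ∀ n : ℕ, 1 ≤ n → μ (N ⁻¹' {n}) = 0 := by
  set p : ℕ → ℝ := fun n => (μ (N ⁻¹' {n})).toReal with hp
  have hp0 : ∀ n, 0 ≤ p n := fun n => ENNReal.toReal_nonneg
  have hpfin : ∀ n : ℕ, μ (N ⁻¹' {n}) ≠ ⊤ := fun n => measure_ne_top μ _
  have hrecp : ∀ n : ℕ, 1 ≤ n → p n = (a + b/(n:ℝ)) * p (n-1) := hrec
  suffices h1 : p 1 = 0 by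
    have hz : ∀ n, p (n+1) = 0 := by
      intro n
      induction n with
      | zero => exact h1
      | succ k ih =>
        have := hrecp (k+2) (by omega)
        rw [show (k+2) - 1 = k+1 from rfl, ih, mul_zero] at this
        exact this
    intro n hn
    have := hz (n-1)
    rw [show n - 1 + 1 = n by omega] at this
    exact (ENNReal.toReal_eq_zero_iff _).mp this |>.resolve_right (hpfin n)
  by_contra hp1
  have hp1pos : 0 < p 1 := lt_of_le_of_ne (hp0 1) (Ne.symm hp1)
  have hab : p 1 = (a + b) * p 0 := by simpa using hrecp 1 le_rfl
  have hp0pos : 0 < p 0 := by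
    rcases lt_or_eq_of_le (hp0 0) with h | h
    · exact h
    · rw [← h, mul_zero] at hab; exact absurd hab hp1
  have habpos : 0 < a + b := by
    by_contra h
    push_neg at h
    nlinarith
  have hppos : ∀ n, 0 < p n := by
    intro n
    induction n with
    | zero => exact hp0pos
    | succ k ih =>
      rw [hrecp (k+1) (by omega), show (k+1) - 1 = k from rfl]
      have hfac : 0 < a + b/((k:ℝ)+1) := by
        rcases le_or_gt 0 b with hb | hb
        · have h1 : 0 ≤ b/((k:ℝ)+1) := by positivity
          linarith
        · have h2 : b ≤ b/((k:ℝ)+1) := by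
            rw [le_div_iff₀ (by positivity : (0:ℝ) < (k:ℝ)+1)]
            nlinarith [Nat.cast_nonneg (α := ℝ) k]
          linarith
      have : ((k:ℕ)+1 : ℝ) = (k:ℝ)+1 := by push_cast; ring
      rw [show (((k+1:ℕ)):ℝ) = (k:ℝ)+1 by push_cast; ring]
      exact mul_pos hfac ih
  set K : ℕ := ⌈(-(b+1))/(a-1)⌉₊ + 1 with hK
  have hKpos : 0 < K := by omega
  have hfac2 : ∀ k : ℕ, K ≤ k → ((k:ℝ)-1)/(k:ℝ) ≤ a + b/(k:ℝ) := by
    intro k hk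
    have hk1 : 1 ≤ k := le_trans hKpos hk
    have hkpos : (0:ℝ) < (k:ℝ) := by exact_mod_cast hk1
    have key : -(b+1) ≤ (a-1)*(k:ℝ) := by
      rcases le_or_gt (-(b+1)) 0 with h | h
      · have : 0 ≤ (a-1)*(k:ℝ) := mul_nonneg (by linarith) (le_of_lt hkpos)
        linarith
      · have ha1' : 1 < a := by
          rcases lt_or_eq_of_le ha1 with h' | h'
          · exact h'
          · exfalso; rw [← h'] at habpos; linarith
        have hKk : ((-(b+1))/(a-1)) ≤ (k:ℝ) := by
          refine le_trans (Nat.le_ceil _) ?_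
          have h1 : (⌈(-(b+1))/(a-1)⌉₊ : ℝ) ≤ (K:ℝ) := by
            rw [hK]; push_cast; linarith
          exact le_trans h1 (by exact_mod_cast hk)
        have := (div_le_iff₀ (by linarith : (0:ℝ) < a - 1)).mp hKk
        linarith
    have h2 : ((k:ℝ)-1)/(k:ℝ) = 1 - 1/(k:ℝ) := by field_simp
    have h3 : a + b/(k:ℝ) - (1 - 1/(k:ℝ)) = ((a-1)*(k:ℝ) + (b+1))/(k:ℝ) := by
      field_simp; ring
    have h4 : 0 ≤ ((a-1)*(k:ℝ) + (b+1))/(k:ℝ) :=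
      div_nonneg (by linarith) (le_of_lt hkpos)
    linarith
  have lower : ∀ n : ℕ, K ≤ n → p K * K / (n:ℝ) ≤ p n := by
    intro n hn
    induction n, hn using Nat.le_induction with
    | base =>
      have : (0:ℝ) < (K:ℝ) := by exact_mod_cast hKpos
      rw [mul_div_assoc, div_self (ne_of_gt this), mul_one]
    | succ n hn ih =>
      have hn1 : 1 ≤ n := le_trans hKpos hn
      have hnpos : (0:ℝ) < (n:ℝ) := by exact_mod_cast hn1
      have hn1pos : (0:ℝ) < (n:ℝ)+1 := by linarith
      have hcast : ((n+1:ℕ):ℝ) = (n:ℝ)+1 := by push_cast; ring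
      have hrw : p (n+1) = (a + b/((n:ℝ)+1)) * p n := by
        rw [hrecp (n+1) (by omega), show (n+1) - 1 = n from rfl, hcast]
      have hf := hfac2 (n+1) (by omega)
      rw [hcast] at hf
      calc p K * K / ((n+1:ℕ):ℝ) = ((n:ℝ)/((n:ℝ)+1)) * (p K * K / (n:ℝ)) := by
            rw [hcast]; field_simp
        _ ≤ ((n:ℝ)/((n:ℝ)+1)) * p n := by
            apply mul_le_mul_of_nonneg_left ih (by positivity)
        _ ≤ (a + b/((n:ℝ)+1)) * p n := by
            apply mul_le_mul_of_nonneg_right _ (hp0 n)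
            have : ((n:ℝ)+1-1)/((n:ℝ)+1) = (n:ℝ)/((n:ℝ)+1) := by ring_nf
            linarith [hf, this]
        _ = p (n+1) := hrw.symm
  have hsum : Summable p := summable_p hN
  have hsum2 : Summable (fun n : ℕ => p (n + K)) := (summable_nat_add_iff K).mpr hsum
  have hsum3 : Summable (fun n : ℕ => p K * (K:ℝ) / ((n:ℝ) + (K:ℝ))) := by
    refine Summable.of_nonneg_of_le (fun n => ?_) (fun n => ?_) hsum2
    · have : (0:ℝ) < (n:ℝ) + K := by
        have : (0:ℝ) < (K:ℝ) := by exact_mod_cast hKpos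
        positivity
      positivity
    · have := lower (n + K) (by omega)
      rw [show (((n + K : ℕ)):ℝ) = (n:ℝ) + (K:ℝ) by push_cast; ring] at this
      exact this
  have hcKpos : 0 < p K * (K:ℝ) := mul_pos (hppos K) (by exact_mod_cast hKpos)
  have hsum4 : Summable (fun n : ℕ => 1 / ((n:ℝ) + (K:ℝ))) := by
    have h := hsum3.mul_left (1/(p K * (K:ℝ)))
    refine (summable_congr (fun n => ?_)).mp h
    field_simp
    exact div_self (hppos K).ne'
  have hsum5 : Summable (fun n : ℕ => 1 / (((n + K:ℕ)):ℝ)) := by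
    refine (summable_congr (fun n => ?_)).mpr hsum4
    rw [show (((n + K : ℕ)):ℝ) = (n:ℝ) + (K:ℝ) by push_cast; ring]
  have : Summable (fun n : ℕ => 1 / ((n:ℝ))) := (summable_nat_add_iff K).mp hsum5
  exact Real.not_summable_one_div_natCast this

end PanjerAux

namespace PanjerAux
set_option linter.unusedSectionVars false

variable {Ω : Type*} [MeasurableSpace Ω] {μ : Measure Ω} [IsProbabilityMeasure μ]
  {X : ℕ → Ω → ℕ} {N : Ω → ℕ} {a b : ℝ}

lemma prob_toReal_le_one {s : Set Ω} : (μ s).toReal ≤ 1 := by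
  have h : μ s ≤ 1 := prob_le_one
  have := ENNReal.toReal_mono (by norm_num) h
  simpa using this

theorem main_fixed (hN : Measurable N) (hX : ∀ j, Measurable (X j))
    (hi : iIndepFun X μ)
    (hid : ∀ j, μ.map (X j) = μ.map (X 0))
    (h3 : Indep (MeasurableSpace.comap N inferInstance)
      (MeasurableSpace.comap (fun ω (k : ℕ) => X k ω) inferInstance) μ)
    (hrec : ∀ n : ℕ, 1 ≤ n → (μ (N ⁻¹' {n})).toReal
      = (a + b/(n:ℝ)) * (μ (N ⁻¹' {n-1})).toReal)
    (hnd : a * (μ (X 0 ⁻¹' {0})).toReal < 1)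
    (x : ℕ) (hx : 1 ≤ x) :
    ∑ y ∈ Icc 1 x, (a + b * (y:ℝ) / (x:ℝ)) * (μ (X 0 ⁻¹' {y})).toReal
        / (1 - a * (μ (X 0 ⁻¹' {0})).toReal)
        * (μ {ω | (∑ j ∈ range (N ω), X j ω) = x - y}).toReal
      = (μ {ω | (∑ j ∈ range (N ω), X j ω) = x}).toReal := by
  set f : ℕ → ℝ := fun y => (μ (X 0 ⁻¹' {y})).toReal with hf
  set p : ℕ → ℝ := fun n => (μ (N ⁻¹' {n})).toReal with hp
  set G : ℕ → ℕ → ℝ := fun n z => (μ {ω | (∑ j ∈ range n, X j ω) = z}).toReal with hG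
  set g : ℕ → ℝ := fun z => (μ {ω | (∑ j ∈ range (N ω), X j ω) = z}).toReal with hg
  have hx0 : (x:ℝ) ≠ 0 := by
    have : (0:ℝ) < (x:ℝ) := by exact_mod_cast hx
    exact ne_of_gt this
  have hg_eq : ∀ z, g z = ∑' n, p n * G n z := fun z => g_eq hN hX h3 z
  have hsumm : ∀ z, Summable (fun n => p n * G n z) := fun z => summable_pG hN hX h3 z
  have hGsucc : ∀ n, G (n+1) x = ∑ y ∈ range (x+1), f y * G n (x - y) := by
    intro n
    have h := Gm_succ (μ := μ) hX hi hid n x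
    have h2 := congrArg ENNReal.toReal h
    rw [ENNReal.toReal_sum (fun y _ =>
      ENNReal.mul_ne_top (measure_ne_top μ _) (measure_ne_top μ _))] at h2
    calc G (n+1) x
        = ∑ y ∈ range (x+1),
            (μ (X 0 ⁻¹' {y}) * μ {ω | (∑ j ∈ range n, X j ω) = x - y}).toReal := h2
      _ = ∑ y ∈ range (x+1), f y * G n (x - y) :=
          Finset.sum_congr rfl (fun y _ => ENNReal.toReal_mul)
  have hsym : ∀ n, (x:ℝ) * G (n+1) x
      = ((n:ℝ)+1) * ∑ y ∈ range (x+1), (y:ℝ) * f y * G n (x - y) := by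
    intro n
    have h := symm_id (μ := μ) hX hi hid (n+1) x
    rw [show (n+1) - 1 = n from rfl] at h
    rw [show (((n+1:ℕ)):ℝ) = (n:ℝ)+1 by push_cast; ring] at h
    exact h
  have hrecp : ∀ n : ℕ, p (n+1) = (a + b/((n:ℝ)+1)) * p n := by
    intro n
    have h := hrec (n+1) (by omega)
    rw [show (n+1) - 1 = n from rfl] at h
    rw [show (((n+1:ℕ)):ℝ) = (n:ℝ)+1 by push_cast; ring] at h
    exact h
  have key : ∀ n, p (n+1) * G (n+1) x
      = ∑ y ∈ range (x+1), ((a + b*(y:ℝ)/(x:ℝ)) * f y) * (p n * G n (x - y)) := by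
    intro n
    have hn1 : ((n:ℝ)+1) ≠ 0 := by positivity
    have expand : ∑ y ∈ range (x+1), ((a + b*(y:ℝ)/(x:ℝ)) * f y) * (p n * G n (x - y))
        = a * p n * (∑ y ∈ range (x+1), f y * G n (x - y))
          + b/(x:ℝ) * p n * (∑ y ∈ range (x+1), (y:ℝ) * f y * G n (x - y)) := by
      rw [Finset.mul_sum, Finset.mul_sum, ← Finset.sum_add_distrib]
      exact Finset.sum_congr rfl (fun y _ => by ring)
    have hSy : ∑ y ∈ range (x+1), (y:ℝ) * f y * G n (x - y)
        = (x:ℝ) * G (n+1) x / ((n:ℝ)+1) := by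
      rw [eq_div_iff hn1]
      linarith [hsym n]
    rw [expand, hrecp n, ← hGsucc n, hSy]
    field_simp
  have hG0 : G 0 x = 0 := by
    have hset : {ω | (∑ j ∈ range 0, X j ω) = x} = (∅ : Set Ω) := by
      ext ω; simp only [Finset.range_zero, Finset.sum_empty, Set.mem_setOf_eq,
        Set.mem_empty_iff_false, iff_false]
      omega
    rw [hG]
    simp only [hset, measure_empty, ENNReal.toReal_zero]
  have hmain : g x = ∑ y ∈ range (x+1), ((a + b*(y:ℝ)/(x:ℝ)) * f y) * g (x - y) := by
    calc g x = ∑' n, p n * G n x := hg_eq x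
      _ = p 0 * G 0 x + ∑' n, p (n+1) * G (n+1) x := Summable.tsum_eq_zero_add (hsumm x)
      _ = ∑' n, p (n+1) * G (n+1) x := by rw [hG0, mul_zero, zero_add]
      _ = ∑' n, ∑ y ∈ range (x+1), ((a + b*(y:ℝ)/(x:ℝ)) * f y) * (p n * G n (x - y)) :=
          tsum_congr key
      _ = ∑ y ∈ range (x+1), ∑' n, ((a + b*(y:ℝ)/(x:ℝ)) * f y) * (p n * G n (x - y)) :=
          Summable.tsum_finsetSum (fun y _ => (hsumm (x - y)).mul_left _)
      _ = ∑ y ∈ range (x+1), ((a + b*(y:ℝ)/(x:ℝ)) * f y) * g (x - y) := by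
          refine Finset.sum_congr rfl (fun y _ => ?_)
          rw [tsum_mul_left, ← hg_eq (x - y)]
  have hsplit := Finset.sum_range_succ'
    (fun y => ((a + b*(y:ℝ)/(x:ℝ)) * f y) * g (x - y)) x
  have hF0 : ((a + b*((0:ℕ):ℝ)/(x:ℝ)) * f 0) * g (x - 0) = a * f 0 * g x := by
    push_cast
    rw [Nat.sub_zero]
    ring
  have main_eq : (1 - a * f 0) * g x
      = ∑ i ∈ range x, ((a + b*((i+1:ℕ):ℝ)/(x:ℝ)) * f (i+1)) * g (x - (i+1)) := by
    rw [hsplit, hF0] at hmain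
    linarith [hmain]
  have hd : (0:ℝ) < 1 - a * f 0 := by linarith [hnd]
  show ∑ y ∈ Icc 1 x, (a + b * (y:ℝ) / (x:ℝ)) * f y / (1 - a * f 0) * g (x - y) = g x
  rw [← Finset.Ico_add_one_right_eq_Icc, Finset.sum_Ico_eq_sum_range]
  rw [show x + 1 - 1 = x from rfl]
  have hterm : ∀ i ∈ range x,
      (a + b * ((1+i:ℕ):ℝ) / (x:ℝ)) * f (1+i) / (1 - a * f 0) * g (x - (1+i))
        = (((a + b*((i+1:ℕ):ℝ)/(x:ℝ)) * f (i+1)) * g (x - (i+1))) / (1 - a * f 0) := by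
    intro i _
    rw [Nat.add_comm 1 i]
    ring
  rw [Finset.sum_congr rfl hterm, ← Finset.sum_div, ← main_eq]
  field_simp

end PanjerAux

namespace PanjerAux
set_option linter.unusedSectionVars false

variable {Ω : Type*} [MeasurableSpace Ω] {μ : Measure Ω} [IsProbabilityMeasure μ]
  {X : ℕ → Ω → ℕ} {N : Ω → ℕ} {a b : ℝ}

lemma bound (hN : Measurable N) (hX : ∀ j, Measurable (X j))
    (hrec : ∀ n : ℕ, 1 ≤ n → (μ (N ⁻¹' {n})).toReal
      = (a + b/(n:ℝ)) * (μ (N ⁻¹' {n-1})).toReal)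
    (hnd : a * (μ (X 0 ⁻¹' {0})).toReal < 1)
    (x y : ℕ) (hx : 1 ≤ x) (hy1 : 1 ≤ y) (hyx : y ≤ x) :
    |(a + b * (y:ℝ) / (x:ℝ)) * (μ (X 0 ⁻¹' {y})).toReal
        / (1 - a * (μ (X 0 ⁻¹' {0})).toReal)
        * (μ {ω | (∑ j ∈ range (N ω), X j ω) = x - y}).toReal| ≤ |a| + |b| := by
  set f0 : ℝ := (μ (X 0 ⁻¹' {0})).toReal with hf0
  set fy : ℝ := (μ (X 0 ⁻¹' {y})).toReal with hfy
  set gw : ℝ := (μ {ω | (∑ j ∈ range (N ω), X j ω) = x - y}).toReal with hgw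
  have hxpos : (0:ℝ) < (x:ℝ) := by exact_mod_cast hx
  have hf0n : 0 ≤ f0 := ENNReal.toReal_nonneg
  have hfyn : 0 ≤ fy := ENNReal.toReal_nonneg
  have hgwn : 0 ≤ gw := ENNReal.toReal_nonneg
  have hgw1 : gw ≤ 1 := prob_toReal_le_one
  have hdpos : (0:ℝ) < 1 - a * f0 := by linarith
  have hcoef : |a + b * (y:ℝ) / (x:ℝ)| ≤ |a| + |b| := by
    refine le_trans (abs_add_le _ _) ?_
    have h1 : |b * (y:ℝ) / (x:ℝ)| = |b| * ((y:ℝ)/(x:ℝ)) := by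
      rw [abs_div, abs_mul]
      rw [abs_of_nonneg (by positivity : (0:ℝ) ≤ (y:ℝ)),
        abs_of_nonneg (le_of_lt hxpos), mul_div_assoc]
    have h2 : (y:ℝ)/(x:ℝ) ≤ 1 := by
      rw [div_le_one hxpos]; exact_mod_cast hyx
    have h3 : |b| * ((y:ℝ)/(x:ℝ)) ≤ |b| * 1 := by
      apply mul_le_mul_of_nonneg_left h2 (abs_nonneg b)
    rw [h1]
    linarith
  by_cases hA : a < 1
  · -- nondegenerate case: fy/(1 - a f0) ≤ 1
    have hdisj : Disjoint (X 0 ⁻¹' {y}) (X 0 ⁻¹' {0}) := by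
      refine Set.disjoint_left.2 (fun ω h1 h2 => ?_)
      simp only [Set.mem_preimage, Set.mem_singleton_iff] at h1 h2
      omega
    have hsum1 : fy + f0 ≤ 1 := by
      rw [hfy, hf0, ← ENNReal.toReal_add (measure_ne_top μ _) (measure_ne_top μ _),
        ← measure_union hdisj ((hX 0) (measurableSet_singleton 0))]
      exact prob_toReal_le_one
    have haf : a * f0 ≤ f0 := by nlinarith
    have hfle : fy ≤ 1 - a * f0 := by linarith
    have hratio : fy / (1 - a * f0) ≤ 1 := by
      rw [div_le_one hdpos]; exact hfle
    have habs : |(a + b * (y:ℝ) / (x:ℝ)) * fy / (1 - a * f0) * gw|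
        = |a + b * (y:ℝ) / (x:ℝ)| * (fy / (1 - a * f0)) * gw := by
      rw [abs_mul, abs_div, abs_mul, abs_of_nonneg hfyn,
        abs_of_nonneg (le_of_lt hdpos), abs_of_nonneg hgwn, mul_div_assoc]
    rw [habs]
    calc |a + b * (y:ℝ) / (x:ℝ)| * (fy / (1 - a * f0)) * gw
        ≤ (|a| + |b|) * (fy / (1 - a * f0)) * gw := by
          apply mul_le_mul_of_nonneg_right (mul_le_mul_of_nonneg_right hcoef
            (div_nonneg hfyn (le_of_lt hdpos))) hgwn
      _ ≤ (|a| + |b|) * 1 * 1 := by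
          apply mul_le_mul (mul_le_mul_of_nonneg_left hratio (by positivity)) hgw1 hgwn
          positivity
      _ = |a| + |b| := by ring
  · -- degenerate case: a ≥ 1
    push_neg at hA
    have hdeg := deg hN hrec hA
    have hnull : μ (⋃ n, N ⁻¹' {n+1}) = 0 :=
      measure_iUnion_null (fun n => hdeg (n+1) (by omega))
    by_cases hlt : y < x
    · -- then x - y ≥ 1 and g (x-y) = 0
      have hsub : {ω | (∑ j ∈ range (N ω), X j ω) = x - y} ⊆ ⋃ n, N ⁻¹' {n+1} := by
        intro ω hω
        have hω' : (∑ j ∈ range (N ω), X j ω) = x - y := hω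
        have hN1 : 1 ≤ N ω := by
          rcases Nat.eq_zero_or_pos (N ω) with h0 | h1
          · rw [h0] at hω'
            simp only [Finset.range_zero, Finset.sum_empty] at hω'
            omega
          · exact h1
        refine Set.mem_iUnion.2 ⟨N ω - 1, ?_⟩
        simp only [Set.mem_preimage, Set.mem_singleton_iff]
        omega
      have hg0 : gw = 0 := by
        rw [hgw]
        have : μ {ω | (∑ j ∈ range (N ω), X j ω) = x - y} = 0 :=
          le_antisymm (le_trans (measure_mono hsub) (le_of_eq hnull)) zero_le
        rw [this, ENNReal.toReal_zero]
      rw [hg0, mul_zero, abs_zero]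
      positivity
    · -- y = x
      have hyx' : y = x := by omega
      have hp0 : μ (N ⁻¹' {0}) = 1 := by
        have hcomp : N ⁻¹' {0} = (⋃ n, N ⁻¹' {n+1})ᶜ := by
          ext ω
          simp only [Set.mem_preimage, Set.mem_singleton_iff, Set.mem_compl_iff,
            Set.mem_iUnion]
          constructor
          · rintro h ⟨i, hi⟩
            omega
          · intro h
            by_contra h0
            exact h ⟨N ω - 1, by omega⟩
        rw [hcomp, measure_compl (MeasurableSet.iUnion
          (fun n => hN (measurableSet_singleton (n+1)))) (measure_ne_top μ _), hnull,
          measure_univ, tsub_zero]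
      have habz : a + b = 0 := by
        have h1 := hrec 1 le_rfl
        rw [show (1:ℕ) - 1 = 0 from rfl, hp0] at h1
        have h2 : (μ (N ⁻¹' {1})).toReal = 0 := by
          rw [hdeg 1 le_rfl, ENNReal.toReal_zero]
        rw [h2] at h1
        simp only [ENNReal.toReal_one, Nat.cast_one, mul_one, div_one] at h1
        linarith [h1.symm]
      have hcz : a + b * (y:ℝ) / (x:ℝ) = 0 := by
        rw [hyx', mul_div_assoc, div_self (ne_of_gt hxpos), mul_one]
        exact habz
      rw [hcz, zero_mul, zero_div, zero_mul, abs_zero]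
      positivity

end PanjerAux

namespace PanjerAux
set_option linter.unusedSectionVars false

lemma full_ae {Ω : Type*} [MeasurableSpace Ω] {μ : Measure Ω} [IsProbabilityMeasure μ]
    {s : Set Ω} (hs : MeasurableSet s) (h : μ s = 1) : ∀ᵐ ω ∂μ, ω ∈ s := by
  rw [ae_iff]
  have : {ω | ¬ ω ∈ s} = sᶜ := rfl
  rw [this, measure_compl hs (measure_ne_top μ s), h, measure_univ, tsub_self]

lemma ae_dirac {Ω : Type*} [MeasurableSpace Ω] (P : Measure Ω) [IsProbabilityMeasure P]
    {d : ℕ} (Θ : Ω → (Fin d → ℝ)) (hΘ : Measurable Θ)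
    (Pθ : (Fin d → ℝ) → Measure Ω) (hPθprob : ∀ θ, IsProbabilityMeasure (Pθ θ))
    (hcons : ∀ B : Set (Fin d → ℝ), MeasurableSet B →
      ∀ᵐ θ ∂((P.map Θ).restrict B), Pθ θ (Θ ⁻¹' B) = 1) :
    ∀ᵐ θ ∂(P.map Θ), ∀ᵐ ω ∂(Pθ θ), Θ ω = θ := by
  set ν := P.map Θ with hν
  have : IsProbabilityMeasure ν := Measure.isProbabilityMeasure_map hΘ.aemeasurable
  set B : Fin d → ℚ → Set (Fin d → ℝ) := fun i q => {v | v i ≤ (q:ℝ)} with hB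
  have hBmeas : ∀ i q, MeasurableSet (B i q) := fun i q =>
    measurableSet_le (measurable_pi_apply i) measurable_const
  have h1 : ∀ (i : Fin d) (q : ℚ), ∀ᵐ θ ∂ν, θ ∈ B i q → Pθ θ (Θ ⁻¹' (B i q)) = 1 :=
    fun i q => ae_imp_of_ae_restrict (hcons (B i q) (hBmeas i q))
  have h2 : ∀ (i : Fin d) (q : ℚ), ∀ᵐ θ ∂ν, θ ∈ (B i q)ᶜ → Pθ θ (Θ ⁻¹' (B i q)ᶜ) = 1 :=
    fun i q => ae_imp_of_ae_restrict (hcons (B i q)ᶜ (hBmeas i q).compl)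
  have hall : ∀ᵐ θ ∂ν, ∀ (i : Fin d) (q : ℚ),
      (θ ∈ B i q → Pθ θ (Θ ⁻¹' (B i q)) = 1)
        ∧ (θ ∈ (B i q)ᶜ → Pθ θ (Θ ⁻¹' (B i q)ᶜ) = 1) := by
    rw [ae_all_iff]
    intro i
    rw [ae_all_iff]
    intro q
    exact (h1 i q).and (h2 i q)
  refine hall.mono (fun θ hθ => ?_)
  have := hPθprob θ
  have hgood : ∀ (i : Fin d) (q : ℚ), ∀ᵐ ω ∂(Pθ θ),
      ((θ i ≤ (q:ℝ)) → Θ ω i ≤ (q:ℝ)) ∧ (((q:ℝ) < θ i) → (q:ℝ) < Θ ω i) := by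
    intro i q
    rcases le_or_gt (θ i) (q:ℝ) with hle | hlt
    · have hfull := full_ae (hΘ (hBmeas i q)) ((hθ i q).1 hle)
      refine hfull.mono (fun ω hω => ⟨fun _ => hω, fun hq => absurd hle (not_le.2 hq)⟩)
    · have hfull := full_ae (hΘ (hBmeas i q).compl) ((hθ i q).2 (by simpa [hB] using not_le.2 hlt))
      refine hfull.mono (fun ω hω => ?_)
      have hω' : ¬ (Θ ω i ≤ (q:ℝ)) := hω
      exact ⟨fun hle' => absurd hle' (not_le.2 hlt), fun _ => not_le.1 hω'⟩
  have hgood' : ∀ᵐ ω ∂(Pθ θ), ∀ (i : Fin d) (q : ℚ),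
      ((θ i ≤ (q:ℝ)) → Θ ω i ≤ (q:ℝ)) ∧ (((q:ℝ) < θ i) → (q:ℝ) < Θ ω i) := by
    rw [ae_all_iff]
    intro i
    rw [ae_all_iff]
    exact hgood i
  refine hgood'.mono (fun ω hω => ?_)
  funext i
  by_contra hne
  rcases lt_or_gt_of_ne hne with hlt | hgt
  · obtain ⟨q, hq1, hq2⟩ := exists_rat_btwn hlt
    exact absurd ((hω i q).2 hq2) (not_lt.2 (le_of_lt hq1))
  · obtain ⟨q, hq1, hq2⟩ := exists_rat_btwn hgt
    exact absurd ((hω i q).1 (le_of_lt hq1)) (not_le.2 hq2)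

end PanjerAux

namespace PanjerAux
set_option linter.unusedSectionVars false

lemma disint {Ω : Type*} [MeasurableSpace Ω] (P : Measure Ω) [IsProbabilityMeasure P]
    {d : ℕ} (Θ : Ω → (Fin d → ℝ)) (hΘ : Measurable Θ)
    (Pθ : (Fin d → ℝ) → Measure Ω) (hPθprob : ∀ θ, IsProbabilityMeasure (Pθ θ))
    (hmeas : ∀ E : Set Ω, MeasurableSet E → Measurable fun θ => Pθ θ E)
    (hint : ∀ E : Set Ω, MeasurableSet E → ∫⁻ θ, Pθ θ E ∂(P.map Θ) = P E)
    (hdirac : ∀ᵐ θ ∂(P.map Θ), ∀ᵐ ω ∂(Pθ θ), Θ ω = θ)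
    {E : Set Ω} (hE : MeasurableSet E)
    {c : (Fin d → ℝ) → ℝ} (hc : Measurable c) :
    ∫ ω, Set.indicator E (fun _ => (1:ℝ)) ω * c (Θ ω) ∂P
      = ∫ θ, c θ * (Pθ θ E).toReal ∂(P.map Θ) := by
  set ν := P.map Θ with hν
  have hνprob : IsProbabilityMeasure ν := Measure.isProbabilityMeasure_map hΘ.aemeasurable
  have hfin : ∀ θ, Pθ θ E ≠ ⊤ := fun θ => by
    have := hPθprob θ; exact measure_ne_top _ _
  -- the key measure identity
  have hM : (P.restrict E).map Θ = ν.withDensity (fun θ => Pθ θ E) := by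
    ext B hB
    rw [Measure.map_apply hΘ hB, Measure.restrict_apply (hΘ hB), withDensity_apply _ hB,
      Set.inter_comm, ← hint (E ∩ Θ ⁻¹' B) (hE.inter (hΘ hB)), ← lintegral_indicator hB]
    refine lintegral_congr_ae (hdirac.mono (fun θ hθ => ?_))
    have := hPθprob θ
    show (Pθ θ) (E ∩ Θ ⁻¹' B) = B.indicator (fun a => (Pθ a) E) θ
    by_cases hθB : θ ∈ B
    · have hae : ∀ᵐ ω ∂(Pθ θ), ω ∈ Θ ⁻¹' B := hθ.mono (fun ω hω => by
        simp only [Set.mem_preimage, hω]; exact hθB)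
      have : Pθ θ (E ∩ Θ ⁻¹' B) = Pθ θ E := by
        apply measure_congr
        rw [Filter.eventuallyEq_set]
        exact hae.mono (fun ω hω => by simp [Set.mem_inter_iff, hω])
      rw [this, Set.indicator_of_mem hθB]
    · have hae : ∀ᵐ ω ∂(Pθ θ), ω ∉ Θ ⁻¹' B := hθ.mono (fun ω hω => by
        simp only [Set.mem_preimage, hω]; exact hθB)
      have hnull : Pθ θ (Θ ⁻¹' B) = 0 := measure_eq_zero_iff_ae_notMem.mpr hae
      have : Pθ θ (E ∩ Θ ⁻¹' B) = 0 :=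
        le_antisymm (le_trans (measure_mono Set.inter_subset_right) (le_of_eq hnull))
          zero_le
      rw [this, Set.indicator_of_notMem hθB]
  -- rewrite the LHS
  have hind : ∀ ω, Set.indicator E (fun _ => (1:ℝ)) ω * c (Θ ω)
      = Set.indicator E (fun ω => c (Θ ω)) ω := by
    intro ω
    by_cases hω : ω ∈ E
    · rw [Set.indicator_of_mem hω, Set.indicator_of_mem hω, one_mul]
    · rw [Set.indicator_of_notMem hω, Set.indicator_of_notMem hω, zero_mul]
  rw [integral_congr_ae (ae_of_all _ hind), integral_indicator hE,
    ← integral_map hΘ.aemeasurable hc.aestronglyMeasurable, hM]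
  -- withDensity to smul
  set ρ : (Fin d → ℝ) → ℝ≥0 := fun θ => (Pθ θ E).toNNReal with hρ
  have hρmeas : Measurable ρ := (hmeas E hE).ennreal_toNNReal
  have hwd : ν.withDensity (fun θ => Pθ θ E) = ν.withDensity (fun θ => (ρ θ : ℝ≥0∞)) := by
    congr 1
    funext θ
    exact (ENNReal.coe_toNNReal (hfin θ)).symm
  rw [hwd, integral_withDensity_eq_integral_smul hρmeas]
  refine integral_congr_ae (ae_of_all _ (fun θ => ?_))
  show ρ θ • c θ = c θ * ((Pθ θ) E).toReal
  rw [NNReal.smul_def, ENNReal.toReal, mul_comm, smul_eq_mul]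

lemma hint_toReal {Ω : Type*} [MeasurableSpace Ω] (P : Measure Ω) [IsProbabilityMeasure P]
    {d : ℕ} (Θ : Ω → (Fin d → ℝ)) (hΘ : Measurable Θ)
    (Pθ : (Fin d → ℝ) → Measure Ω) (hPθprob : ∀ θ, IsProbabilityMeasure (Pθ θ))
    (hmeas : ∀ E : Set Ω, MeasurableSet E → Measurable fun θ => Pθ θ E)
    (hint : ∀ E : Set Ω, MeasurableSet E → ∫⁻ θ, Pθ θ E ∂(P.map Θ) = P E)
    {E : Set Ω} (hE : MeasurableSet E) :
    (P E).toReal = ∫ θ, (Pθ θ E).toReal ∂(P.map Θ) := by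
  rw [← hint E hE, integral_toReal (hmeas E hE).aemeasurable]
  refine ae_of_all _ (fun θ => ?_)
  have := hPθprob θ
  exact measure_lt_top _ _

end PanjerAux

/-- Panjer-type recursion for the pmf of the aggregate claims of a mixed
compound distribution whose claim number distribution lies in `Panjer(a(Θ), b(Θ); 0)`:
for `x ≥ 1`,
`P(S = x) = Σ_{y=1}^{x} ∫ 1_{S = x−y} · (a(Θ) + b(Θ)y/x) · f_Θ(y)/(1 − a(Θ) f_Θ(0)) dP`. -/
theorem mixed_compound_panjer_recursion
    {Ω : Type*} [MeasurableSpace Ω] (P : Measure Ω) [IsProbabilityMeasure P]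
    (d : ℕ) (hd : 1 ≤ d) (D : Set (Fin d → ℝ)) (hD : MeasurableSet D)
    (Θ : Ω → (Fin d → ℝ)) (hΘ : Measurable Θ) (hΘD : ∀ ω, Θ ω ∈ D)
    (Pθ : (Fin d → ℝ) → Measure Ω) (hPθprob : ∀ θ, IsProbabilityMeasure (Pθ θ))
    (hmeas : ∀ E : Set Ω, MeasurableSet E → Measurable fun θ => Pθ θ E)
    (hint : ∀ E : Set Ω, MeasurableSet E → ∫⁻ θ, Pθ θ E ∂(P.map Θ) = P E)
    (hcons : ∀ B : Set (Fin d → ℝ), MeasurableSet B →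
      ∀ᵐ θ ∂((P.map Θ).restrict B), Pθ θ (Θ ⁻¹' B) = 1)
    (N : Ω → ℕ) (hN : Measurable N)
    (X : ℕ → Ω → ℕ) (hX : ∀ j, Measurable (X j))
    (a b : (Fin d → ℝ) → ℝ) (ha : Measurable a) (hb : Measurable b)
    (hainta : Integrable (fun ω => a (Θ ω)) P)
    (haintb : Integrable (fun ω => b (Θ ω)) P)
    (hae : ∀ᵐ θ ∂(P.map Θ),
      -- (1) conditionally i.i.d. claim sizes
      (iIndepFun X (Pθ θ)
        ∧ ∀ j : ℕ, (Pθ θ).map (X j) = (Pθ θ).map (X 0))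
      -- (2) conditional independence of claim number and claim sizes
      ∧ Indep (MeasurableSpace.comap N inferInstance)
          (MeasurableSpace.comap (fun ω (k : ℕ) => X k ω) inferInstance) (Pθ θ)
      -- (3) Panjer recursion for the conditional claim number distribution
      ∧ (∀ n : ℕ, 1 ≤ n →
          (Pθ θ {ω | N ω = n}).toReal
            = (a θ + b θ / (n : ℝ)) * (Pθ θ {ω | N ω = n - 1}).toReal)
      -- (4) nondegeneracy
      ∧ a θ * (Pθ θ {ω | X 0 ω = 0}).toReal < 1) :
    ∀ x : ℕ, 1 ≤ x →
      (P {ω | (∑ j ∈ Finset.range (N ω), X j ω) = x}).toReal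
        = ∑ y ∈ Finset.Icc 1 x,
            ∫ ω, Set.indicator {ω' | (∑ j ∈ Finset.range (N ω'), X j ω') = x - y}
                (fun _ => (1 : ℝ)) ω
              * (a (Θ ω) + b (Θ ω) * (y : ℝ) / (x : ℝ))
              * (Pθ (Θ ω) {ω' | X 0 ω' = y}).toReal
              / (1 - a (Θ ω) * (Pθ (Θ ω) {ω' | X 0 ω' = 0}).toReal) ∂P := by
  intro x hx
  have hνprob : IsProbabilityMeasure (P.map Θ) := Measure.isProbabilityMeasure_map hΘ.aemeasurable
  have hdirac := PanjerAux.ae_dirac P Θ hΘ Pθ hPθprob hcons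
  have hS : Measurable (fun ω => ∑ j ∈ Finset.range (N ω), X j ω) :=
    PanjerAux.measurable_S hN hX
  have hSset : ∀ w : ℕ, MeasurableSet {ω | (∑ j ∈ Finset.range (N ω), X j ω) = w} :=
    fun w => hS (measurableSet_singleton w)
  have hia : Integrable a (P.map Θ) :=
    (integrable_map_measure ha.aestronglyMeasurable hΘ.aemeasurable).mpr hainta
  have hib : Integrable b (P.map Θ) :=
    (integrable_map_measure hb.aestronglyMeasurable hΘ.aemeasurable).mpr haintb
  set c : ℕ → (Fin d → ℝ) → ℝ := fun y θ =>
    (a θ + b θ * (y:ℝ) / (x:ℝ)) * (Pθ θ (X 0 ⁻¹' {y})).toReal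
      / (1 - a θ * (Pθ θ (X 0 ⁻¹' {0})).toReal) with hc
  have hcmeas : ∀ y : ℕ, Measurable (c y) := by
    intro y
    apply Measurable.div
    · exact (ha.add ((hb.mul_const _).div_const _)).mul
        (hmeas _ ((hX 0) (measurableSet_singleton y))).ennreal_toReal
    · exact (measurable_const.sub
        (ha.mul (hmeas _ ((hX 0) (measurableSet_singleton 0))).ennreal_toReal))
  -- each summand transformed by disintegration
  have hstep1 : ∀ y ∈ Finset.Icc 1 x,
      ∫ ω, Set.indicator {ω' | (∑ j ∈ Finset.range (N ω'), X j ω') = x - y}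
          (fun _ => (1 : ℝ)) ω
        * (a (Θ ω) + b (Θ ω) * (y : ℝ) / (x : ℝ))
        * (Pθ (Θ ω) {ω' | X 0 ω' = y}).toReal
        / (1 - a (Θ ω) * (Pθ (Θ ω) {ω' | X 0 ω' = 0}).toReal) ∂P
      = ∫ θ, c y θ
          * (Pθ θ {ω' | (∑ j ∈ Finset.range (N ω'), X j ω') = x - y}).toReal
          ∂(P.map Θ) := by
    intro y _
    rw [← PanjerAux.disint P Θ hΘ Pθ hPθprob hmeas hint hdirac (hSset (x - y)) (hcmeas y)]
    refine integral_congr_ae (ae_of_all _ (fun ω => ?_))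
    show Set.indicator {ω' | (∑ j ∈ Finset.range (N ω'), X j ω') = x - y}
          (fun _ => (1 : ℝ)) ω
        * (a (Θ ω) + b (Θ ω) * (y : ℝ) / (x : ℝ))
        * (Pθ (Θ ω) (X 0 ⁻¹' {y})).toReal
        / (1 - a (Θ ω) * (Pθ (Θ ω) (X 0 ⁻¹' {0})).toReal)
      = Set.indicator {ω' | (∑ j ∈ Finset.range (N ω'), X j ω') = x - y}
          (fun _ => (1 : ℝ)) ω
        * ((a (Θ ω) + b (Θ ω) * (y : ℝ) / (x : ℝ)) * (Pθ (Θ ω) (X 0 ⁻¹' {y})).toReal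
          / (1 - a (Θ ω) * (Pθ (Θ ω) (X 0 ⁻¹' {0})).toReal))
    ring
  -- integrability of each φ_y
  have hphi : ∀ y ∈ Finset.Icc 1 x, Integrable (fun θ => c y θ
      * (Pθ θ {ω' | (∑ j ∈ Finset.range (N ω'), X j ω') = x - y}).toReal) (P.map Θ) := by
    intro y hy
    obtain ⟨hy1, hyx⟩ := Finset.mem_Icc.mp hy
    refine Integrable.mono' (hia.abs.add hib.abs)
      (((hcmeas y).mul (hmeas _ (hSset (x - y))).ennreal_toReal).aestronglyMeasurable) ?_
    refine hae.mono (fun θ hθ => ?_)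
    have := hPθprob θ
    have hb := PanjerAux.bound (μ := Pθ θ) (a := a θ) (b := b θ) hN hX
      hθ.2.2.1 hθ.2.2.2 x y hx hy1 hyx
    calc ‖c y θ * (Pθ θ {ω' | (∑ j ∈ Finset.range (N ω'), X j ω') = x - y}).toReal‖
        = |(a θ + b θ * (y:ℝ) / (x:ℝ)) * (Pθ θ (X 0 ⁻¹' {y})).toReal
            / (1 - a θ * (Pθ θ (X 0 ⁻¹' {0})).toReal)
            * (Pθ θ {ω' | (∑ j ∈ Finset.range (N ω'), X j ω') = x - y}).toReal| := rfl
      _ ≤ |a θ| + |b θ| := hb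
  -- a.e. identity from the fixed-measure Panjer recursion
  have hmain : ∀ᵐ θ ∂(P.map Θ),
      (Pθ θ {ω' | (∑ j ∈ Finset.range (N ω'), X j ω') = x}).toReal
        = ∑ y ∈ Finset.Icc 1 x, c y θ
            * (Pθ θ {ω' | (∑ j ∈ Finset.range (N ω'), X j ω') = x - y}).toReal := by
    refine hae.mono (fun θ hθ => ?_)
    have := hPθprob θ
    exact (PanjerAux.main_fixed (μ := Pθ θ) (a := a θ) (b := b θ) hN hX
      hθ.1.1 hθ.1.2 hθ.2.1 hθ.2.2.1 hθ.2.2.2 x hx).symm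
  calc (P {ω | (∑ j ∈ Finset.range (N ω), X j ω) = x}).toReal
      = ∫ θ, (Pθ θ {ω' | (∑ j ∈ Finset.range (N ω'), X j ω') = x}).toReal ∂(P.map Θ) :=
        PanjerAux.hint_toReal P Θ hΘ Pθ hPθprob hmeas hint (hSset x)
    _ = ∫ θ, ∑ y ∈ Finset.Icc 1 x, c y θ
          * (Pθ θ {ω' | (∑ j ∈ Finset.range (N ω'), X j ω') = x - y}).toReal ∂(P.map Θ) :=
        integral_congr_ae hmain
    _ = ∑ y ∈ Finset.Icc 1 x, ∫ θ, c y θ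
          * (Pθ θ {ω' | (∑ j ∈ Finset.range (N ω'), X j ω') = x - y}).toReal ∂(P.map Θ) :=
        integral_finset_sum _ hphi
    _ = _ := Finset.sum_congr rfl (fun y hy => (hstep1 y hy).symm)
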